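/- Let V be a finite-dimensional real vector space and h a nondegenerate symmetric bilinear form on V. Let S denote the vector space of linear maps A : V → End(V) satisfying A(u)(v) = A(v)(u) for all u, v ∈ V, and let W denote the vector space of linear maps from V to the space of symmetric bilinear forms on V. Then the linear map Φ : S → W defined by Φ(A)(u)(v, w) = −(1/2)·(h(A(u)v, w) + h(v, A(u)w)) is a linear isomorphism. -/

import Mathlib

/-- The space `S` of linear maps `A : V → End(V)` (curried as `V →ₗ V →ₗ V`) satisfying
the symmetry `A u v = A v u`. -/
noncomputable def symmPairMaps (V : Type*) [AddCommGroup V] [Module ℝ V] :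
    Submodule ℝ (V →ₗ[ℝ] V →ₗ[ℝ] V) where
  carrier := {A | ∀ u v : V, A u v = A v u}
  add_mem' := by
    intro a b ha hb u v
    simp [ha u v, hb u v]
  zero_mem' := by intro u v; simp
  smul_mem' := by
    intro c a ha u v
    simp [ha u v]

/-- The space `W` of linear maps from `V` to the symmetric bilinear forms on `V`
(curried as trilinear forms symmetric in the last two arguments). -/
noncomputable def mapsToSymmBilin (V : Type*) [AddCommGroup V] [Module ℝ V] :
    Submodule ℝ (V →ₗ[ℝ] V →ₗ[ℝ] V →ₗ[ℝ] ℝ) where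
  carrier := {b | ∀ u v w : V, b u v w = b u w v}
  add_mem' := by
    intro a b ha hb u v w
    simp [ha u v w, hb u v w]
  zero_mem' := by intro u v w; simp
  smul_mem' := by
    intro c a ha u v w
    simp [ha u v w]

noncomputable def Phi0 {V : Type*} [AddCommGroup V] [Module ℝ V]
    (h : V →ₗ[ℝ] V →ₗ[ℝ] ℝ) :
    (V →ₗ[ℝ] V →ₗ[ℝ] V) →ₗ[ℝ] (V →ₗ[ℝ] V →ₗ[ℝ] V →ₗ[ℝ] ℝ) where
  toFun A := (-(1/2 : ℝ)) • (A.compr₂ h + (LinearMap.lflip (R₀ := ℝ)).toLinearMap ∘ₗ A.compr₂ h)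
  map_add' A B := by
    ext u v w
    simp only [LinearMap.smul_apply, LinearMap.add_apply, LinearMap.compr₂_apply,
      LinearMap.comp_apply, LinearEquiv.coe_coe, LinearMap.lflip_apply, LinearMap.flip_apply, map_add, smul_eq_mul]
    ring
  map_smul' c A := by
    ext u v w
    simp only [LinearMap.smul_apply, LinearMap.add_apply, LinearMap.compr₂_apply,
      LinearMap.comp_apply, LinearEquiv.coe_coe, LinearMap.lflip_apply, LinearMap.flip_apply, map_smul, smul_eq_mul,
      RingHom.id_apply]
    ring

theorem Phi0_apply {V : Type*} [AddCommGroup V] [Module ℝ V]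
    (h : V →ₗ[ℝ] V →ₗ[ℝ] ℝ) (A : V →ₗ[ℝ] V →ₗ[ℝ] V) (u v w : V) :
    Phi0 h A u v w = -(1/2 : ℝ) * (h (A u v) w + h (A u w) v) := by
  simp only [Phi0, LinearMap.coe_mk, AddHom.coe_mk, LinearMap.smul_apply,
    LinearMap.add_apply, LinearMap.compr₂_apply, LinearMap.comp_apply,
    LinearEquiv.coe_coe, LinearMap.lflip_apply, LinearMap.flip_apply, smul_eq_mul]

set_option maxHeartbeats 1000000 in
set_option synthInstance.maxHeartbeats 200000 in
/-- (The correspondence underlying Proposition 10.2.) Let `V` be a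
finite-dimensional real vector space and `h` a nondegenerate symmetric bilinear form on
`V`. Then the linear map `Φ` from the space `S` of linear maps `A : V → End(V)` with
`A u v = A v u` to the space `W` of linear maps from `V` to symmetric bilinear forms,
defined by `Φ(A)(u)(v,w) = -(1/2)·(h (A u v) w + h v (A u w))`, is a linear isomorphism. -/
theorem statement11 {V : Type*} [AddCommGroup V] [Module ℝ V] [FiniteDimensional ℝ V]
    (h : V →ₗ[ℝ] V →ₗ[ℝ] ℝ)
    (hsymm : ∀ v w : V, h v w = h w v)
    (hnondeg : ∀ v : V, (∀ w : V, h v w = 0) → v = 0) :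
    ∃ Φ : symmPairMaps V ≃ₗ[ℝ] mapsToSymmBilin V,
      ∀ (A : symmPairMaps V) (u v w : V),
        (Φ A : V →ₗ[ℝ] V →ₗ[ℝ] V →ₗ[ℝ] ℝ) u v w
          = -(1/2 : ℝ) * (h ((A : V →ₗ[ℝ] V →ₗ[ℝ] V) u v) w
              + h v ((A : V →ₗ[ℝ] V →ₗ[ℝ] V) u w)) := by
  -- h as an equivalence V ≃ dual V
  have hinj : Function.Injective h := by
    rw [injective_iff_map_eq_zero]
    intro v hv
    exact hnondeg v (fun w => by rw [hv]; rfl)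
  have hbij : Function.Bijective h :=
    ⟨hinj, (LinearMap.injective_iff_surjective_of_finrank_eq_finrank
      Subspace.dual_finrank_eq.symm).mp hinj⟩
  let e : V ≃ₗ[ℝ] (V →ₗ[ℝ] ℝ) := LinearEquiv.ofBijective h hbij
  have he : ∀ f : V →ₗ[ℝ] ℝ, h (e.symm f) = f := fun f => e.apply_symm_apply f
  -- the restricted linear map
  have hmaps : ∀ A ∈ symmPairMaps V, Phi0 h A ∈ mapsToSymmBilin V := by
    intro A _ u v w
    rw [Phi0_apply, Phi0_apply]
    ring
  let Φlin : symmPairMaps V →ₗ[ℝ] mapsToSymmBilin V := (Phi0 h).restrict hmaps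
  have hΦlin : ∀ (A : symmPairMaps V) (u v w : V),
      (Φlin A : V →ₗ[ℝ] V →ₗ[ℝ] V →ₗ[ℝ] ℝ) u v w
        = -(1/2 : ℝ) * (h ((A : V →ₗ[ℝ] V →ₗ[ℝ] V) u v) w
            + h ((A : V →ₗ[ℝ] V →ₗ[ℝ] V) u w) v) := by
    intro A u v w
    exact Phi0_apply h A u v w
  have hbijΦ : Function.Bijective Φlin := by
    constructor
    · rw [injective_iff_map_eq_zero]
      intro A hA
      have hz : ∀ u v w : V, h ((A : V →ₗ[ℝ] V →ₗ[ℝ] V) u v) w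
          + h ((A : V →ₗ[ℝ] V →ₗ[ℝ] V) u w) v = 0 := by
        intro u v w
        have := hΦlin A u v w
        rw [hA] at this
        simp at this
        linarith [this]
      set T : V → V → V → ℝ := fun u v w => h ((A : V →ₗ[ℝ] V →ₗ[ℝ] V) u v) w with hT
      have hsym12 : ∀ u v w, T u v w = T v u w := by
        intro u v w
        simp only [hT]
        rw [A.2 u v]
      have hanti : ∀ u v w, T u v w = - T u w v := by
        intro u v w
        have := hz u v w
        simp only [hT]
        linarith
      have hTzero : ∀ u v w, T u v w = 0 := by
        intro u v w
        have h1 : T u v w = - T u w v := hanti u v w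
        have h2 : T u w v = T w u v := hsym12 u w v
        have h3 : T w u v = - T w v u := hanti w u v
        have h4 : T w v u = T v w u := hsym12 w v u
        have h5 : T v w u = - T v u w := hanti v w u
        have h6 : T v u w = T u v w := hsym12 v u w
        linarith
      have hA0 : ∀ u v : V, (A : V →ₗ[ℝ] V →ₗ[ℝ] V) u v = 0 := by
        intro u v
        exact hnondeg _ (fun w => hTzero u v w)
      apply Subtype.ext
      ext u v
      simp [hA0 u v]
    · rintro ⟨b, hb⟩
      -- construct the preimage
      let T : V →ₗ[ℝ] V →ₗ[ℝ] V →ₗ[ℝ] ℝ :=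
        letI : AddCommGroup (V →ₗ[ℝ] V →ₗ[ℝ] ℝ) := LinearMap.addCommGroup
        (LinearMap.lflip (R₀ := ℝ)).toLinearMap ∘ₗ b.flip - b - b.flip
      have hTapp : ∀ u v w, T u v w = b w u v - b u v w - b v u w := by
        intro u v w
        simp only [T, LinearMap.sub_apply, LinearMap.comp_apply,
          LinearEquiv.coe_coe, LinearMap.lflip_apply, LinearMap.flip_apply]
        rfl
      let A : V →ₗ[ℝ] V →ₗ[ℝ] V := T.compr₂ e.symm.toLinearMap
      have hAapp : ∀ u v, A u v = e.symm (T u v) := fun u v => rfl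
      have hhA : ∀ u v : V, h (A u v) = T u v := by
        intro u v
        rw [hAapp]
        exact he (T u v)
      have hAmem : A ∈ symmPairMaps V := by
        intro u v
        rw [hAapp, hAapp]
        congr 1
        ext w
        rw [hTapp, hTapp]
        have := hb w u v
        linarith
      refine ⟨⟨A, hAmem⟩, ?_⟩
      apply Subtype.ext
      show Phi0 h A = b
      ext u v w
      rw [Phi0_apply]
      have h1 : h (A u v) w = T u v w := by rw [hhA]
      have h2 : h (A u w) v = T u w v := by rw [hhA]
      rw [h1, h2, hTapp, hTapp]
      have e1 := hb u v w
      have e2 := hb v u w  -- b v u w = b v w u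
      have e3 := hb w u v
      linarith
  refine ⟨LinearEquiv.ofBijective Φlin hbijΦ, ?_⟩
  intro A u v w
  have : (LinearEquiv.ofBijective Φlin hbijΦ) A = Φlin A := rfl
  rw [this, hΦlin A u v w, hsymm v ((A : V →ₗ[ℝ] V →ₗ[ℝ] V) u w)]
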